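/- For the posterior jump vector in the stable-Beta-Dirichlet multinomial model, with density on S_q proportional to ∏ⱼ sⱼ^{c_{j}+γⱼ-1} · s_·^{-α-∑γⱼ} (1-s_·)^{M+β+α-c-1} where c = ∑ c_j, the sum S = ∑ⱼ Jⱼ is Beta(c-α, M+β+α-c) distributed and independent of the normalized vector D = (J₁/S,...,J_q/S), which is Dirichlet(c₁+γ₁,...,c_q+γ_q) distributed. -/

import Mathlib

open MeasureTheory Real

lemma aux_stmt18 (Sn Q SF B Sc P G1 G2 G3 G4 G5 : ℝ) (h : Sn * (Q * SF) = Sc * P)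
    (h1 : G1 ≠ 0) (h2 : G2 ≠ 0) (h3 : G3 ≠ 0) (h4 : G4 ≠ 0) (h5 : G5 ≠ 0) :
    Sn * (Q * SF * B) / (G1 * G2 / G3 * G4 / G5) = Sc * B * G3 / (G1 * G2) * (G5 / G4 * P) := by
  field_simp
  linear_combination B * h

/-- Posterior jump vector in the stable-Beta-Dirichlet multinomial model: under the change
of variables s = S·d (Jacobian S^n, q = n+1), the normalized density, proportional to
∏ⱼ sⱼ^{cⱼ+γⱼ-1} s_·^{-α-∑γ}(1-s_·)^{M+β+α-c-1}, factorizes into the Beta(c-α, M+β+α-c)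
density in S times the Dirichlet(c₁+γ₁,…,c_q+γ_q) density in d; hence S = ∑Jⱼ is
Beta(c-α, M+β+α-c) and independent of D = J/S, which is Dirichlet(c+γ). -/
theorem stmt_18 (n : ℕ) (α β : ℝ) (γ : Fin (n + 1) → ℝ) (c : Fin (n + 1) → ℕ) (M : ℕ)
    (hα0 : 0 ≤ α) (hα1 : α < 1) (hβ : -α < β) (hγ : ∀ j, 0 < γ j)
    (hcα : 0 < ((∑ j, c j : ℕ) : ℝ) - α)
    (hMc : 0 < (M : ℝ) + β + α - (∑ j, c j : ℕ)) :
    ∀ S ∈ Set.Ioo (0:ℝ) 1, ∀ d : Fin n → ℝ, (∀ i, 0 < d i) → (∑ i, d i < 1) →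
      S ^ n *
          ((∏ j, (S * (Fin.snoc d (1 - ∑ i, d i) : Fin (n + 1) → ℝ) j) ^ ((c j : ℝ) + γ j - 1)) *
            (∑ j, S * (Fin.snoc d (1 - ∑ i, d i) : Fin (n + 1) → ℝ) j) ^ (-α - ∑ j, γ j) *
            (1 - ∑ j, S * (Fin.snoc d (1 - ∑ i, d i) : Fin (n + 1) → ℝ) j) ^
              ((M : ℝ) + β + α - (∑ j, c j : ℕ) - 1)) /
          (Real.Gamma (((∑ j, c j : ℕ) : ℝ) - α) *
              Real.Gamma ((M : ℝ) + β + α - (∑ j, c j : ℕ)) /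
              Real.Gamma ((M : ℝ) + β) *
            (∏ j, Real.Gamma ((c j : ℝ) + γ j)) /
              Real.Gamma (((∑ j, c j : ℕ) : ℝ) + ∑ j, γ j)) =
        (S ^ (((∑ j, c j : ℕ) : ℝ) - α - 1) *
            (1 - S) ^ ((M : ℝ) + β + α - (∑ j, c j : ℕ) - 1) *
            Real.Gamma ((M : ℝ) + β) /
            (Real.Gamma (((∑ j, c j : ℕ) : ℝ) - α) *
              Real.Gamma ((M : ℝ) + β + α - (∑ j, c j : ℕ)))) *
          ((Real.Gamma (((∑ j, c j : ℕ) : ℝ) + ∑ j, γ j) /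
              ∏ j, Real.Gamma ((c j : ℝ) + γ j)) *
            ∏ j, ((Fin.snoc d (1 - ∑ i, d i) : Fin (n + 1) → ℝ) j) ^ ((c j : ℝ) + γ j - 1)) := by
  intro S hS d hd hsum
  obtain ⟨hS0, hS1⟩ := hS
  set d' : Fin (n+1) → ℝ := Fin.snoc d (1 - ∑ i, d i) with hd'
  have hd'pos : ∀ j, 0 < d' j := by
    intro j
    refine Fin.lastCases ?_ ?_ j
    · simp only [hd', Fin.snoc_last]; linarith
    · intro i; simpa only [hd', Fin.snoc_castSucc] using hd i
  have hsum1 : ∑ j, d' j = 1 := by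
    rw [Fin.sum_univ_castSucc]
    simp [hd', Fin.snoc_castSucc, Fin.snoc_last]
  have hsumS : ∑ j, S * d' j = S := by
    rw [← Finset.mul_sum, hsum1, mul_one]
  rw [hsumS]
  have hprod : (∏ j, (S * d' j) ^ ((c j : ℝ) + γ j - 1))
      = S ^ ((((∑ j, c j : ℕ) : ℝ) + (∑ j, γ j)) - (n+1)) *
        ∏ j, (d' j) ^ ((c j : ℝ) + γ j - 1) := by
    have : (∏ j, (S * d' j) ^ ((c j : ℝ) + γ j - 1))
        = (∏ j, S ^ ((c j : ℝ) + γ j - 1)) * ∏ j, (d' j) ^ ((c j : ℝ) + γ j - 1) := by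
      rw [← Finset.prod_mul_distrib]
      exact Finset.prod_congr rfl fun j _ =>
        Real.mul_rpow hS0.le (hd'pos j).le
    rw [this, ← Real.rpow_sum_of_pos hS0]
    congr 2
    rw [Finset.sum_sub_distrib, Finset.sum_add_distrib]
    push_cast
    simp [Finset.card_univ]
  rw [hprod]
  have hSn : (S : ℝ) ^ n = S ^ (n : ℝ) := by
    rw [Real.rpow_natCast]
  rw [hSn]
  have hcomb : S ^ (n : ℝ) * (S ^ ((((∑ j, c j : ℕ) : ℝ) + (∑ j, γ j)) - (n+1)) *
        (∏ j, (d' j) ^ ((c j : ℝ) + γ j - 1)) * S ^ (-α - ∑ j, γ j))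
      = S ^ (((∑ j, c j : ℕ) : ℝ) - α - 1) * ∏ j, (d' j) ^ ((c j : ℝ) + γ j - 1) := by
    rw [show (((∑ j, c j : ℕ) : ℝ) - α - 1)
        = (n : ℝ) + (((((∑ j, c j : ℕ) : ℝ) + (∑ j, γ j)) - (n+1)) + (-α - ∑ j, γ j)) by ring,
      Real.rpow_add hS0, Real.rpow_add hS0]
    ring
  have hMβ : 0 < (M : ℝ) + β := by linarith
  have hG1 : 0 < Real.Gamma (((∑ j, c j : ℕ) : ℝ) - α) := Real.Gamma_pos_of_pos hcα
  have hG2 : 0 < Real.Gamma ((M : ℝ) + β + α - (∑ j, c j : ℕ)) := Real.Gamma_pos_of_pos hMc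
  have hG3 : 0 < Real.Gamma ((M : ℝ) + β) := Real.Gamma_pos_of_pos hMβ
  have hG4 : 0 < ∏ j, Real.Gamma ((c j : ℝ) + γ j) :=
    Finset.prod_pos fun j _ => Real.Gamma_pos_of_pos (by
      have h1 := hγ j; have h2 : (0:ℝ) ≤ (c j : ℝ) := Nat.cast_nonneg _; linarith)
  have hG5 : 0 < Real.Gamma (((∑ j, c j : ℕ) : ℝ) + ∑ j, γ j) := by
    have h1 : 0 < ∑ j, γ j := Finset.sum_pos (fun j _ => hγ j) Finset.univ_nonempty
    have h2 : (0:ℝ) ≤ ((∑ j, c j : ℕ) : ℝ) := Nat.cast_nonneg _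
    exact Real.Gamma_pos_of_pos (by linarith)
  exact aux_stmt18 _ _ _ _ _ _ _ _ _ _ _ hcomb hG1.ne' hG2.ne' hG3.ne' hG4.ne' hG5.ne'
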